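/- The set L(V) of Lie elements of k[G] with respect to V is a Lie subalgebra of k[G] (with bracket [x,y] = xy − yx): it is a k-linear subspace, and if x, y ∈ L(V) then xy − yx ∈ L(V). -/

import Mathlib

set_option maxHeartbeats 1000000


/-- The wedge product `v₁ ∧ ⋯ ∧ vₘ` of a family of vectors, as an element of the `m`-th
exterior power `⋀[k]^m V`. -/
noncomputable def wedge (k : Type*) [Field k] (V : Type*) [AddCommGroup V] [Module k V]
    (m : ℕ) (v : Fin m → V) : ⋀[k]^m V :=
  ⟨ExteriorAlgebra.ιMulti k m v, ExteriorAlgebra.ιMulti_range k m (Set.mem_range_self v)⟩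

lemma wedge_span (k : Type*) [Field k] (V : Type*) [AddCommGroup V] [Module k V] (m : ℕ) :
    Submodule.span k (Set.range (wedge k V m)) = ⊤ := by
  apply Submodule.map_injective_of_injective (Submodule.injective_subtype (⋀[k]^m V))
  rw [Submodule.map_span, Submodule.map_top, Submodule.range_subtype]
  have himg : (⇑(⋀[k]^m V).subtype '' Set.range (wedge k V m))
      = Set.range (ExteriorAlgebra.ιMulti k m (M := V)) := by
    rw [← Set.range_comp]; rfl
  rw [himg]
  exact ExteriorAlgebra.ιMulti_span_fixedDegree k m

/-- Extensionality for endomorphisms of the exterior power: it suffices to agree on wedges. -/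
lemma wedge_ext (k : Type*) [Field k] (V : Type*) [AddCommGroup V] [Module k V] (m : ℕ)
    (f g : Module.End k (⋀[k]^m V))
    (h : ∀ v : Fin m → V, f (wedge k V m v) = g (wedge k V m v)) : f = g := by
  refine LinearMap.ext_on (wedge_span k V m) ?_
  rintro _ ⟨v, rfl⟩
  exact h v

/-- The set `L(V)` of Lie elements of `k[G]` (those `x` with `A_m(x) = B_m(x)` for all
`m = 0, 1, …, dim V`) is a Lie subalgebra of `k[G]`: a `k`-linear subspace closed under
the commutator bracket `[x,y] = xy - yx`. -/
theorem statement3 (k G V : Type*) [Field k] [Group G] [AddCommGroup V] [Module k V]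
    [FiniteDimensional k V] (ρ : Representation k G V)
    (A B : (m : ℕ) → G → Module.End k (⋀[k]^m V))
    (hA : ∀ (m : ℕ) (g : G) (v : Fin m → V),
      A m g (wedge k V m v) = wedge k V m fun i => ρ g (v i))
    (hB : ∀ (m : ℕ) (g : G) (v : Fin m → V),
      B m g (wedge k V m v) = ∑ p : Fin m, wedge k V m (Function.update v p (ρ g (v p))))
    (Ahat Bhat : (m : ℕ) → MonoidAlgebra k G →ₗ[k] Module.End k (⋀[k]^m V))
    (hAhat : ∀ (m : ℕ) (g : G), Ahat m (MonoidAlgebra.single g 1) = A m g)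
    (hBhat : ∀ (m : ℕ) (g : G), Bhat m (MonoidAlgebra.single g 1) = B m g) :
    let L : Set (MonoidAlgebra k G) :=
      {x | ∀ m ≤ Module.finrank k V, Ahat m x = Bhat m x}
    (0 : MonoidAlgebra k G) ∈ L ∧
      (∀ x y, x ∈ L → y ∈ L → x + y ∈ L) ∧
      (∀ (c : k) (x), x ∈ L → c • x ∈ L) ∧
      ∀ x y, x ∈ L → y ∈ L → x * y - y * x ∈ L := by
  intro L
  -- `of k G g = single g 1`
  have hof : ∀ g : G, MonoidAlgebra.of k G g = MonoidAlgebra.single g 1 := fun g => rfl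
  -- A is multiplicative on group elements
  have hAmulG : ∀ (m : ℕ) (g h : G), A m (g * h) = A m g * A m h := by
    intro m g h
    apply wedge_ext
    intro v
    rw [Module.End.mul_apply, hA, hA, hA]
    congr 1
    funext i
    rw [map_mul]
    rfl
  -- Ahat is multiplicative
  have hAmul : ∀ (m : ℕ) (x y : MonoidAlgebra k G),
      Ahat m (x * y) = Ahat m x * Ahat m y := by
    intro m x y
    have key1 : ∀ (g : G) (y : MonoidAlgebra k G),
        Ahat m (MonoidAlgebra.single g 1 * y)
          = Ahat m (MonoidAlgebra.single g 1) * Ahat m y := by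
      intro g y
      induction y using MonoidAlgebra.induction_on with
      | of h =>
        rw [hof, MonoidAlgebra.single_mul_single, one_mul, hAhat, hAhat, hAhat, hAmulG]
      | add f f' hf hf' =>
        rw [mul_add, map_add, hf, hf', map_add, mul_add]
      | smul r f hf =>
        rw [mul_smul_comm, map_smul, hf, map_smul, mul_smul_comm]
    induction x using MonoidAlgebra.induction_on with
    | of g => rw [hof]; exact key1 g y
    | add f f' hf hf' => rw [add_mul, map_add, hf, hf', map_add, add_mul]
    | smul r f hf => rw [smul_mul_assoc, map_smul, hf, map_smul, smul_mul_assoc]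
  -- the commutator identity for B on group elements
  have hBcommG : ∀ (m : ℕ) (g h : G),
      (B m (g * h) - B m (h * g) : Module.End k (⋀[k]^m V))
        = B m g * B m h - B m h * B m g := by
    intro m g h
    apply wedge_ext
    intro v
    -- abbreviation for the double-update terms
    set F : G → G → Fin m → Fin m → ⋀[k]^m V := fun a b p q =>
      wedge k V m (Function.update (Function.update v q (ρ b (v q))) p
        (ρ a (Function.update v q (ρ b (v q)) p))) with hF
    have hBB : ∀ a b : G, (B m a * B m b) (wedge k V m v) = ∑ q, ∑ p, F a b p q := by
      intro a b
      rw [Module.End.mul_apply, hB, map_sum]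
      exact Finset.sum_congr rfl fun q _ => hB m a _
    have hdiag : ∀ (a b : G) (q : Fin m),
        F a b q q = wedge k V m (Function.update v q (ρ (a * b) (v q))) := by
      intro a b q
      rw [hF]
      simp only [Function.update_idem, Function.update_self, map_mul]
      rfl
    have hoff : ∀ (a b : G) (p q : Fin m), p ≠ q → F a b p q = F b a q p := by
      intro a b p q hpq
      rw [hF]
      simp only [Function.update_of_ne hpq, Function.update_of_ne (Ne.symm hpq)]
      congr 1
      rw [Function.update_comm hpq]
    have hsplit : ∀ a b : G,
        ∑ q, ∑ p, F a b p q
          = ∑ q, wedge k V m (Function.update v q (ρ (a * b) (v q)))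
            + ∑ q, ∑ p ∈ Finset.univ.erase q, F a b p q := by
      intro a b
      rw [← Finset.sum_add_distrib]
      refine Finset.sum_congr rfl fun q _ => ?_
      rw [← hdiag a b q]
      exact (Finset.add_sum_erase _ (fun p => F a b p q) (Finset.mem_univ q)).symm
    have hswap : ∑ q, ∑ p ∈ Finset.univ.erase q, F g h p q
        = ∑ q, ∑ p ∈ Finset.univ.erase q, F h g p q := by
      rw [Finset.sum_sigma', Finset.sum_sigma']
      refine Finset.sum_nbij' (fun x => ⟨x.2, x.1⟩) (fun x => ⟨x.2, x.1⟩) ?_ ?_ ?_ ?_ ?_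
      · rintro ⟨q, p⟩ hx
        simp only [Finset.mem_sigma, Finset.mem_univ, Finset.mem_erase, true_and,
          and_true] at hx ⊢
        exact Ne.symm hx
      · rintro ⟨q, p⟩ hx
        simp only [Finset.mem_sigma, Finset.mem_univ, Finset.mem_erase, true_and,
          and_true] at hx ⊢
        exact Ne.symm hx
      · rintro ⟨q, p⟩ _; rfl
      · rintro ⟨q, p⟩ _; rfl
      · rintro ⟨q, p⟩ hx
        simp only [Finset.mem_sigma, Finset.mem_univ, Finset.mem_erase, true_and,
          and_true] at hx
        exact hoff g h p q hx
    rw [LinearMap.sub_apply, LinearMap.sub_apply, hBB, hBB, hB, hB, hsplit, hsplit, hswap]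
    abel
  -- the commutator identity for Bhat
  have hBcomm : ∀ (m : ℕ) (x y : MonoidAlgebra k G),
      Bhat m (x * y - y * x) = Bhat m x * Bhat m y - Bhat m y * Bhat m x := by
    intro m x y
    have key1 : ∀ (g : G) (y : MonoidAlgebra k G),
        Bhat m (MonoidAlgebra.single g 1 * y - y * MonoidAlgebra.single g 1)
          = Bhat m (MonoidAlgebra.single g 1) * Bhat m y
            - Bhat m y * Bhat m (MonoidAlgebra.single g 1) := by
      intro g y
      induction y using MonoidAlgebra.induction_on with
      | of h =>
        rw [hof, MonoidAlgebra.single_mul_single, MonoidAlgebra.single_mul_single, one_mul,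
          map_sub, hBhat, hBhat, hBhat, hBhat, hBcommG]
      | add f f' hf hf' =>
        have : MonoidAlgebra.single g 1 * (f + f') - (f + f') * MonoidAlgebra.single g 1
            = (MonoidAlgebra.single g 1 * f - f * MonoidAlgebra.single g 1)
              + (MonoidAlgebra.single g 1 * f' - f' * MonoidAlgebra.single g 1) := by
          rw [mul_add, add_mul]; abel
        rw [this, map_add, hf, hf', map_add, mul_add, add_mul]
        abel
      | smul r f hf =>
        have : MonoidAlgebra.single g 1 * (r • f) - (r • f) * MonoidAlgebra.single g 1
            = r • (MonoidAlgebra.single g 1 * f - f * MonoidAlgebra.single g 1) := by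
          rw [mul_smul_comm, smul_mul_assoc, smul_sub]
        rw [this, map_smul, hf, map_smul]
        simp only [mul_smul_comm, smul_mul_assoc]
        refine LinearMap.ext fun z => ?_
        simp [smul_sub]

    induction x using MonoidAlgebra.induction_on with
    | of g => rw [hof]; exact key1 g y
    | add f f' hf hf' =>
      have : (f + f') * y - y * (f + f') = (f * y - y * f) + (f' * y - y * f') := by
        rw [add_mul, mul_add]; abel
      rw [this, map_add, hf, hf', map_add, add_mul, mul_add]
      abel
    | smul r f hf =>
      have : (r • f) * y - y * (r • f) = r • (f * y - y * f) := by
        rw [smul_mul_assoc, mul_smul_comm, smul_sub]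
      rw [this, map_smul, hf, map_smul]
      simp only [smul_mul_assoc, mul_smul_comm]
      refine LinearMap.ext fun z => ?_
      simp [smul_sub]
  refine ⟨?_, ?_, ?_, ?_⟩
  · intro m _; rw [map_zero, map_zero]
  · intro x y hx hy m hm
    rw [map_add, map_add, hx m hm, hy m hm]
  · intro c x hx m hm
    rw [map_smul, map_smul, hx m hm]
  · intro x y hx hy m hm
    rw [map_sub, hAmul, hAmul, hx m hm, hy m hm, ← hBcomm, map_sub]
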